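/- Let sd be a self-similar subdivision scheme on the simplex T_n such that no 1-dimensional face (edge) of any subsimplex of sd(T_n) coincides with an edge of T_n. Let d be the diameter of T_n and r the maximal diameter of the subsimplexes of sd(T_n). Then r < d, and the maximal diameter of subsimplexes of the m-th self-similar subdivision sd^m(T_n) is at most (r/d)^m · d, which tends to 0 as m → ∞. -/

import Mathlib

open Finset Metric

private lemma euclid_dist_eq {n : ℕ} (p q : EuclideanSpace ℝ (Fin n)) :
    dist p q = Real.sqrt (∑ i, (p i - q i)^2) := by
  rw [EuclideanSpace.dist_eq]
  congr 1
  exact Finset.sum_congr rfl fun i _ => by rw [Real.dist_eq, sq_abs]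

private lemma sum_single_one {n : ℕ} (a : Fin n) :
    ∑ i, EuclideanSpace.single a (1:ℝ) i = 1 := by
  simp [EuclideanSpace.single_apply]

private lemma single_mem_simplex {n : ℕ} (a : Fin n) :
    EuclideanSpace.single a (1:ℝ) ∈
      {p : EuclideanSpace ℝ (Fin n) | (∀ i, 0 ≤ p i) ∧ ∑ i, p i = 1} := by
  refine ⟨fun i => ?_, sum_single_one a⟩
  rw [EuclideanSpace.single_apply]
  split <;> norm_num

private lemma sum_sq_single {n : ℕ} (a b : Fin n) (h : a ≠ b) :
    ∑ i, (EuclideanSpace.single a (1:ℝ) i - EuclideanSpace.single b (1:ℝ) i)^2 = 2 := by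
  simp only [EuclideanSpace.single_apply]
  have key : ∀ x : Fin n, ((if x = a then (1:ℝ) else 0) - if x = b then 1 else 0) ^ 2
      = (if x = a then 1 else 0) + (if x = b then 1 else 0) := by
    intro x
    by_cases h1 : x = a <;> by_cases h2 : x = b <;> simp_all
  rw [Finset.sum_congr rfl fun x _ => key x, Finset.sum_add_distrib]
  simp
  norm_num

private lemma sum_sq_le_two {n : ℕ} (p q : EuclideanSpace ℝ (Fin n))
    (hp0 : ∀ i, 0 ≤ p i) (hp1 : ∑ i, p i = 1)
    (hq0 : ∀ i, 0 ≤ q i) (hq1 : ∑ i, q i = 1) :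
    ∑ i, (p i - q i)^2 ≤ 2 := by
  have key : ∑ i, (p i - q i)^2 = ∑ i, p i ^ 2 + ∑ i, q i ^2 - 2 * ∑ i, p i * q i := by
    simp only [sub_sq]
    rw [Finset.sum_add_distrib, Finset.sum_sub_distrib, Finset.mul_sum]
    ring
  have hple : ∀ i, p i ≤ 1 := fun i => hp1 ▸ Finset.single_le_sum (fun j _ => hp0 j) (mem_univ i)
  have hqle : ∀ i, q i ≤ 1 := fun i => hq1 ▸ Finset.single_le_sum (fun j _ => hq0 j) (mem_univ i)
  have h1 : ∑ i, p i ^ 2 ≤ 1 := by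
    calc ∑ i, p i ^ 2 ≤ ∑ i, p i :=
          Finset.sum_le_sum fun i _ => by nlinarith [hp0 i, hple i]
      _ = 1 := hp1
  have h2 : ∑ i, q i ^ 2 ≤ 1 := by
    calc ∑ i, q i ^ 2 ≤ ∑ i, q i :=
          Finset.sum_le_sum fun i _ => by nlinarith [hq0 i, hqle i]
      _ = 1 := hq1
  have h3 : 0 ≤ ∑ i, p i * q i :=
    Finset.sum_nonneg fun i _ => mul_nonneg (hp0 i) (hq0 i)
  linarith [key]

private lemma vertex_case {n : ℕ} (p q : EuclideanSpace ℝ (Fin n))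
    (hp0 : ∀ i, 0 ≤ p i) (hp1 : ∑ i, p i = 1)
    (hq0 : ∀ i, 0 ≤ q i) (hq1 : ∑ i, q i = 1)
    (h : ∑ i, (p i - q i)^2 = 2) :
    ∃ a b : Fin n, a ≠ b ∧ p = EuclideanSpace.single a 1 ∧ q = EuclideanSpace.single b 1 := by
  have key : ∑ i, (p i - q i)^2 = ∑ i, p i ^ 2 + ∑ i, q i ^2 - 2 * ∑ i, p i * q i := by
    simp only [sub_sq]
    rw [Finset.sum_add_distrib, Finset.sum_sub_distrib, Finset.mul_sum]
    ring
  have hple : ∀ i, p i ≤ 1 := fun i => hp1 ▸ Finset.single_le_sum (fun j _ => hp0 j) (mem_univ i)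
  have hqle : ∀ i, q i ≤ 1 := fun i => hq1 ▸ Finset.single_le_sum (fun j _ => hq0 j) (mem_univ i)
  have hsqp : ∀ i ∈ Finset.univ (α := Fin n), p i ^ 2 ≤ p i :=
    fun i _ => by nlinarith [hp0 i, hple i]
  have hsqq : ∀ i ∈ Finset.univ (α := Fin n), q i ^ 2 ≤ q i :=
    fun i _ => by nlinarith [hq0 i, hqle i]
  have h1 : ∑ i, p i ^ 2 ≤ 1 := (Finset.sum_le_sum hsqp).trans_eq hp1
  have h2 : ∑ i, q i ^ 2 ≤ 1 := (Finset.sum_le_sum hsqq).trans_eq hq1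
  have h3 : 0 ≤ ∑ i, p i * q i :=
    Finset.sum_nonneg fun i _ => mul_nonneg (hp0 i) (hq0 i)
  have e1 : ∑ i, p i ^ 2 = 1 := by linarith
  have e2 : ∑ i, q i ^ 2 = 1 := by linarith
  have e3 : ∑ i, p i * q i = 0 := by linarith
  have hpsq : ∀ i ∈ Finset.univ (α := Fin n), p i ^ 2 = p i :=
    (Finset.sum_eq_sum_iff_of_le hsqp).1 (e1.trans hp1.symm)
  have hqsq : ∀ i ∈ Finset.univ (α := Fin n), q i ^ 2 = q i :=
    (Finset.sum_eq_sum_iff_of_le hsqq).1 (e2.trans hq1.symm)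
  have hpbool : ∀ i, p i = 0 ∨ p i = 1 := by
    intro i
    have := hpsq i (mem_univ i)
    have h' : p i * (p i - 1) = 0 := by nlinarith
    rcases mul_eq_zero.1 h' with h'' | h''
    · exact Or.inl h''
    · exact Or.inr (by linarith)
  have hqbool : ∀ i, q i = 0 ∨ q i = 1 := by
    intro i
    have := hqsq i (mem_univ i)
    have h' : q i * (q i - 1) = 0 := by nlinarith
    rcases mul_eq_zero.1 h' with h'' | h''
    · exact Or.inl h''
    · exact Or.inr (by linarith)
  have hex : ∀ (x : EuclideanSpace ℝ (Fin n)), (∀ i, 0 ≤ x i) → (∑ i, x i = 1) →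
      (∀ i, x i = 0 ∨ x i = 1) → ∃ a, x = EuclideanSpace.single a 1 := by
    intro x hx0 hx1 hxb
    have hexa : ∃ a, x a = 1 := by
      by_contra hc
      push_neg at hc
      have : ∀ i, x i = 0 := fun i => (hxb i).resolve_right (hc i)
      rw [Finset.sum_congr rfl fun i _ => this i] at hx1
      simp at hx1
    obtain ⟨a, ha⟩ := hexa
    refine ⟨a, PiLp.ext fun i => ?_⟩
    rw [EuclideanSpace.single_apply]
    by_cases hia : i = a
    · rw [hia, ha, if_pos rfl]
    · rw [if_neg hia]
      rcases hxb i with h0 | h1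
      · exact h0
      · exfalso
        have hsub : ({a, i} : Finset (Fin n)) ⊆ Finset.univ := Finset.subset_univ _
        have hpair : ∑ j ∈ ({a, i} : Finset (Fin n)), x j = x a + x i :=
          Finset.sum_pair (fun hh => hia hh.symm)
        have := Finset.sum_le_sum_of_subset_of_nonneg hsub (fun j _ _ => hx0 j)
        rw [hpair, hx1, ha, h1] at this
        linarith
  obtain ⟨a, hpa⟩ := hex p hp0 hp1 hpbool
  obtain ⟨b, hqb⟩ := hex q hq0 hq1 hqbool
  refine ⟨a, b, ?_, hpa, hqb⟩
  intro hab
  have hterm : p a * q a ≤ ∑ i, p i * q i :=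
    Finset.single_le_sum (fun i _ => mul_nonneg (hp0 i) (hq0 i)) (mem_univ a)
  have hqa : q a = 1 := by rw [hqb, ← hab, EuclideanSpace.single_apply, if_pos rfl]
  have hpa1 : p a = 1 := by rw [hpa, EuclideanSpace.single_apply, if_pos rfl]
  rw [e3, hqa, hpa1] at hterm
  linarith

theorem stmt_6 {n : ℕ} (hn : 2 ≤ n)
    (sdIter : ℕ → Finset (Finset (EuclideanSpace ℝ (Fin n))))
    (d r : ℝ)
    (hd : d = Metric.diam {p : EuclideanSpace ℝ (Fin n) | (∀ i, 0 ≤ p i) ∧ ∑ i, p i = 1})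
    (hT : ∀ σ ∈ sdIter 0, (σ : Set (EuclideanSpace ℝ (Fin n))) =
      Set.range (fun i : Fin n => EuclideanSpace.single i (1 : ℝ)))
    (hvert : ∀ σ ∈ sdIter 1, ∀ p ∈ σ, (∀ i, 0 ≤ p i) ∧ ∑ i, p i = 1)
    (hne : (sdIter 1).Nonempty)
    (hr : IsGreatest {x | ∃ σ ∈ sdIter 1, x = Metric.diam (σ : Set (EuclideanSpace ℝ (Fin n)))} r)
    (hedge : ∀ σ ∈ sdIter 1, ∀ p ∈ σ, ∀ q ∈ σ, p ≠ q → ∀ a b : Fin n, a ≠ b →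
      segment ℝ p q ≠
        segment ℝ (EuclideanSpace.single a (1 : ℝ)) (EuclideanSpace.single b (1 : ℝ)))
    (hself : ∀ m, ∀ σ ∈ sdIter (m + 1), ∃ τ ∈ sdIter m,
      Metric.diam (σ : Set (EuclideanSpace ℝ (Fin n))) ≤
        (r / d) * Metric.diam (τ : Set (EuclideanSpace ℝ (Fin n)))) :
    r < d ∧
      (∀ m, ∀ σ ∈ sdIter m,
        Metric.diam (σ : Set (EuclideanSpace ℝ (Fin n))) ≤ (r / d) ^ m * d) ∧
      Filter.Tendsto (fun m : ℕ => (r / d) ^ m * d) Filter.atTop (nhds 0) := by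
  set S : Set (EuclideanSpace ℝ (Fin n)) :=
    {p : EuclideanSpace ℝ (Fin n) | (∀ i, 0 ≤ p i) ∧ ∑ i, p i = 1} with hS
  -- distance bound on the simplex
  have hSd : ∀ p ∈ S, ∀ q ∈ S, dist p q ≤ Real.sqrt 2 := by
    intro p hp q hq
    rw [euclid_dist_eq]
    exact Real.sqrt_le_sqrt (sum_sq_le_two p q hp.1 hp.2 hq.1 hq.2)
  have hSb : Bornology.IsBounded S :=
    Metric.isBounded_iff.2 ⟨Real.sqrt 2, fun {x} hx {y} hy => hSd x hx y hy⟩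
  -- two distinct vertices
  have ha01 : (⟨0, by omega⟩ : Fin n) ≠ ⟨1, by omega⟩ := by
    exact Fin.ne_of_val_ne (by norm_num)
  have hdist_single : ∀ a b : Fin n, a ≠ b →
      dist (EuclideanSpace.single a (1:ℝ)) (EuclideanSpace.single b (1:ℝ)) = Real.sqrt 2 := by
    intro a b hab
    rw [euclid_dist_eq, sum_sq_single a b hab]
  have hd2 : d = Real.sqrt 2 := by
    rw [hd]
    apply le_antisymm
    · exact Metric.diam_le_of_forall_dist_le (Real.sqrt_nonneg 2) hSd
    · rw [← hdist_single _ _ ha01]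
      exact Metric.dist_le_diam_of_mem hSb (single_mem_simplex _) (single_mem_simplex _)
  have hd0 : 0 < d := by rw [hd2]; positivity
  -- r ≤ d
  have hrd : r ≤ d := by
    obtain ⟨σ, hσ, hrσ⟩ := hr.1
    rw [hrσ, hd2]
    apply Metric.diam_le_of_forall_dist_le (Real.sqrt_nonneg 2)
    intro x hx y hy
    exact hSd x (hvert σ hσ x hx) y (hvert σ hσ y hy)
  have hr0 : 0 ≤ r := by
    obtain ⟨σ, hσ, hrσ⟩ := hr.1
    rw [hrσ]; exact Metric.diam_nonneg
  -- r < d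
  have hrlt : r < d := by
    rcases lt_or_eq_of_le hrd with h | h
    · exact h
    · exfalso
      obtain ⟨σ, hσ, hrσ⟩ := hr.1
      have hdiam : Metric.diam (σ : Set (EuclideanSpace ℝ (Fin n))) = d := by rw [← hrσ, h]
      have hσne : σ.Nonempty := by
        rw [Finset.nonempty_iff_ne_empty]
        intro hempty
        rw [hempty] at hdiam
        simp at hdiam
        exact hd0.ne' hdiam.symm
      obtain ⟨⟨p, q⟩, hpq, hmax⟩ :=
        Finset.exists_max_image (σ ×ˢ σ) (fun x => dist x.1 x.2) (hσne.product hσne)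
      rw [Finset.mem_product] at hpq
      obtain ⟨hp, hq⟩ := hpq
      have hdeq : Metric.diam (σ : Set (EuclideanSpace ℝ (Fin n))) = dist p q := by
        apply le_antisymm
        · apply Metric.diam_le_of_forall_dist_le dist_nonneg
          intro x hx y hy
          exact hmax (x, y) (Finset.mem_product.2 ⟨hx, hy⟩)
        · exact Metric.dist_le_diam_of_mem σ.finite_toSet.isBounded hp hq
      have hdistpq : dist p q = Real.sqrt 2 := by rw [← hdeq, hdiam, hd2]
      have hpS := hvert σ hσ p hp
      have hqS := hvert σ hσ q hq
      have hsum2 : ∑ i, (p i - q i)^2 = 2 := by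
        have := hdistpq
        rw [euclid_dist_eq] at this
        have hnn : 0 ≤ ∑ i, (p i - q i)^2 := Finset.sum_nonneg fun i _ => sq_nonneg _
        nlinarith [Real.sq_sqrt (show (0:ℝ) ≤ 2 by norm_num),
          Real.sq_sqrt hnn, Real.sqrt_nonneg 2]
      obtain ⟨a, b, hab, hpa, hqb⟩ := vertex_case p q hpS.1 hpS.2 hqS.1 hqS.2 hsum2
      have hpqne : p ≠ q := by
        intro hpq'
        rw [hpq', dist_self] at hdistpq
        have : (0:ℝ) < Real.sqrt 2 := by positivity
        linarith [hdistpq ▸ this]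
      exact hedge σ hσ p hp q hq hpqne a b hab (by rw [hpa, hqb])
  refine ⟨hrlt, ?_, ?_⟩
  · -- diameter bound by induction
    have hrd0 : 0 ≤ r / d := div_nonneg hr0 hd0.le
    intro m
    induction m with
    | zero =>
      intro σ hσ
      rw [pow_zero, one_mul, hT σ hσ, hd]
      apply Metric.diam_mono _ hSb
      rintro _ ⟨i, rfl⟩
      exact single_mem_simplex i
    | succ m ih =>
      intro σ hσ
      obtain ⟨τ, hτ, hle⟩ := hself m σ hσ
      calc Metric.diam (σ : Set (EuclideanSpace ℝ (Fin n)))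
          ≤ (r / d) * Metric.diam (τ : Set (EuclideanSpace ℝ (Fin n))) := hle
        _ ≤ (r / d) * ((r / d) ^ m * d) :=
            mul_le_mul_of_nonneg_left (ih τ hτ) hrd0
        _ = (r / d) ^ (m + 1) * d := by ring
  · have hrd0 : 0 ≤ r / d := div_nonneg hr0 hd0.le
    have hrd1 : r / d < 1 := (div_lt_one hd0).2 hrlt
    have := (tendsto_pow_atTop_nhds_zero_of_lt_one hrd0 hrd1).mul_const d
    simpa using this
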